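/- Let T be a minimal strongly slide-free G-tree. Then no vertex stabilizer G_v fixes an edge of T; consequently distinct vertices have distinct stabilizers, and each vertex stabilizer is a maximal elliptic subgroup of G. -/

import Mathlib

open SimpleGraph

section GTree

variable (G : Type*) [Group G]

/-- The group action preserves adjacency: `G` acts on the graph by automorphisms. -/
def ActsOnGraph {V : Type*} [MulAction G V] (T : SimpleGraph V) : Prop :=
  ∀ (g : G) (u v : V), T.Adj u v → T.Adj (g • u) (g • v)

/-- The action is without inversions: no element exchanges the two endpoints of an edge. -/
def NoInversions {V : Type*} [MulAction G V] (T : SimpleGraph V) : Prop :=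
  ∀ (g : G) (u v : V), T.Adj u v → ¬(g • u = v ∧ g • v = u)

/-- A subgroup is elliptic if it fixes a vertex. -/
def IsElliptic (V : Type*) [MulAction G V] (H : Subgroup G) : Prop :=
  ∃ v : V, ∀ h ∈ H, h • v = v

/-- The stabilizer of the edge with endpoints `u`, `v` (for an action without
inversions this is the pointwise stabilizer of the edge). -/
def edgeStab {V : Type*} [MulAction G V] (u v : V) : Subgroup G :=
  MulAction.stabilizer G u ⊓ MulAction.stabilizer G v

/-- The set of vertices on the unique path between two vertices of a tree. -/
noncomputable def seg {V : Type*} {T : SimpleGraph V} (hT : T.IsTree) (x y : V) : Set V :=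
  {z | z ∈ ((hT.existsUnique_path x y).exists.choose).support}

/-- A set of vertices is a subtree if it contains the arc between any two of its points. -/
def IsSubtree {V : Type*} {T : SimpleGraph V} (hT : T.IsTree) (S : Set V) : Prop :=
  ∀ x ∈ S, ∀ y ∈ S, seg hT x y ⊆ S

/-- A set of vertices is invariant under the group action. -/
def GInvariant {V : Type*} [MulAction G V] (S : Set V) : Prop :=
  ∀ (g : G), ∀ v ∈ S, g • v ∈ S

/-- The action is minimal: there is no proper nonempty invariant subtree. -/
def MinimalAction {V : Type*} [MulAction G V] {T : SimpleGraph V} (hT : T.IsTree) : Prop :=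
  ∀ S : Set V, S.Nonempty → GInvariant G S → IsSubtree hT S → S = Set.univ

/-- Strongly slide-free: if two edges at a common vertex `v` have nested
stabilizers, they are in the same `G_v`-orbit. -/
def StronglySlideFree {V : Type*} [MulAction G V] (T : SimpleGraph V) : Prop :=
  ∀ v a b : V, T.Adj v a → T.Adj v b → edgeStab G v a ≤ edgeStab G v b →
    ∃ g ∈ MulAction.stabilizer G v, g • a = b

/-- Reduced: for every edge whose stabilizer equals the stabilizer of one of its
endpoints, the two endpoints are in the same `G`-orbit. -/
def Reduced {V : Type*} [MulAction G V] (T : SimpleGraph V) : Prop :=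
  ∀ u v : V, T.Adj u v → edgeStab G u v = MulAction.stabilizer G v → ∃ g : G, g • u = v

end GTree

section Aux

open SimpleGraph Walk

private lemma list_map_eq_self {α : Type*} {f : α → α} :
    ∀ {l : List α}, l.map f = l → ∀ z ∈ l, f z = z := by
  intro l
  induction l with
  | nil => intro _ z hz; simp at hz
  | cons a t ih =>
      intro h z hz
      simp only [List.map_cons, List.cons.injEq] at h
      rw [List.mem_cons] at hz
      rcases hz with hz | hz
      · exact hz ▸ h.1
      · exact ih h.2 z hz

variable {G V : Type*} [Group G] [MulAction G V] {T : SimpleGraph V}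

private lemma mem_seg_iff (hT : T.IsTree) {x y z : V} :
    z ∈ seg hT x y ↔ z ∈ ((hT.existsUnique_path x y).exists.choose).support :=
  Iff.rfl

/-- If a group element fixes both endpoints, it fixes the whole segment pointwise. -/
private lemma fix_seg (hT : T.IsTree) (hact : ActsOnGraph G T) {h : G} {x y : V}
    (hx : h • x = x) (hy : h • y = y) : ∀ z ∈ seg hT x y, h • z = z := by
  classical
  set p := (hT.existsUnique_path x y).exists.choose with hpdef
  have hp1 : p.IsPath := (hT.existsUnique_path x y).exists.choose_spec
  let f : T →g T := ⟨fun v => h • v, fun ha => hact h _ _ ha⟩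
  have hinj : Function.Injective f := MulAction.injective h
  have hmapPath : ((p.map f).copy hx hy).IsPath := by
    rw [Walk.isPath_copy]
    exact Walk.map_isPath_of_injective hinj hp1
  have heq : (p.map f).copy hx hy = p :=
    (hT.existsUnique_path x y).unique hmapPath hp1
  have hsup : p.support.map (fun v => h • v) = p.support := by
    conv_rhs => rw [← heq]
    rw [Walk.support_copy, Walk.support_map]
    rfl
  intro z hz
  exact list_map_eq_self hsup z hz

/-- If `x ≠ y`, the segment from `x` to `y` begins with an edge. -/
private lemma exists_adj_seg (hT : T.IsTree) {x y : V} (hxy : x ≠ y) :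
    ∃ x1, T.Adj x x1 ∧ x1 ∈ seg hT x y := by
  set p := (hT.existsUnique_path x y).exists.choose with hpdef
  obtain ⟨u, ha, q, hq⟩ := Walk.exists_eq_cons_of_ne hxy p
  refine ⟨u, ha, ?_⟩
  rw [mem_seg_iff, ← hpdef, hq]
  simp [Walk.support_cons]

/-- An interior vertex of a path has two distinct neighbours. -/
private lemma two_neighbors {x y z : V} {p : T.Walk x y} (hp : p.IsPath)
    (hz : z ∈ p.support) (hzx : z ≠ x) (hzy : z ≠ y) :
    ∃ u1 u2, u1 ≠ u2 ∧ T.Adj z u1 ∧ T.Adj z u2 := by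
  classical
  set q := p.takeUntil z hz with hqdef
  set r := p.dropUntil z hz with hrdef
  have hqr : q.append r = p := p.take_spec hz
  have hqp : q.IsPath := hp.takeUntil hz
  obtain ⟨u2, ha2, r', hr'⟩ := Walk.exists_eq_cons_of_ne hzy r
  obtain ⟨u1, ha1, q', hq'⟩ := Walk.exists_eq_cons_of_ne hzx q.reverse
  have ha1' : T.Adj z u1 := ha1
  refine ⟨u1, u2, ?_, ha1', ha2⟩
  have hu1 : u1 ∈ q.support := by
    have : u1 ∈ q.reverse.support := by rw [hq']; simp [Walk.support_cons]
    rwa [Walk.support_reverse, List.mem_reverse] at this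
  have hu2 : u2 ∈ r.support.tail := by
    rw [hr']
    simp [Walk.support_cons]
  have hnd : (q.support ++ r.support.tail).Nodup := by
    rw [← Walk.support_append, hqr]
    exact hp.support_nodup
  rcases List.nodup_append'.mp hnd with ⟨-, -, hdisj⟩
  intro he
  exact hdisj hu1 (he ▸ hu2)

/-- Key lemma: in a minimal strongly slide-free tree there is no edge `(v,w)`
with `G_v ≤ G_w`. -/
private lemma no_nested_adj (hT : T.IsTree)
    (hact : ActsOnGraph G T) (hni : NoInversions G T)
    (hmin : MinimalAction G hT) (hssf : StronglySlideFree G T)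
    {v w : V} (hadj : T.Adj v w)
    (hle : MulAction.stabilizer G v ≤ MulAction.stabilizer G w) : False := by
  classical
  -- every neighbour of v equals w
  have huniq : ∀ u, T.Adj v u → u = w := by
    intro u hu
    have hle' : edgeStab G v u ≤ edgeStab G v w := by
      refine le_inf inf_le_left ?_
      exact le_trans inf_le_left hle
    obtain ⟨g, hg, hgu⟩ := hssf v u w hu hadj hle'
    have hginv : g⁻¹ ∈ MulAction.stabilizer G w := hle (inv_mem hg)
    calc u = g⁻¹ • (g • u) := by rw [inv_smul_smul]
    _ = g⁻¹ • w := by rw [hgu]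
    _ = w := hginv
  -- every neighbour of g • v equals g • w
  have huniq' : ∀ (g : G) u, T.Adj (g • v) u → u = g • w := by
    intro g u hu
    have h1 : T.Adj v (g⁻¹ • u) := by
      have := hact g⁻¹ _ _ hu
      simpa using this
    have h2 := huniq _ h1
    calc u = g • (g⁻¹ • u) := by rw [smul_inv_smul]
    _ = g • w := by rw [h2]
  -- w is not in the orbit of v
  have hwno : ∀ g : G, g • v ≠ w := by
    intro g hg
    have hadj' : T.Adj (g • v) v := hg ▸ hadj.symm
    have hv : v = g • w := huniq' g v hadj'
    exact hni g v w hadj ⟨hg, hv.symm⟩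
  -- the complement of the orbit of v is a nonempty invariant subtree
  set S : Set V := {x | ∀ g : G, g • v ≠ x} with hSdef
  have hSne : S.Nonempty := ⟨w, hwno⟩
  have hSinv : GInvariant G S := by
    intro g x hx g' hg'
    apply hx (g⁻¹ * g')
    rw [mul_smul]
    rw [hg']
    exact inv_smul_smul g x
  have hSsub : IsSubtree hT S := by
    intro x hx y hy z hz g hgz
    have hzx : z ≠ x := by
      intro h; exact hx g (h ▸ hgz)
    have hzy : z ≠ y := by
      intro h; exact hy g (h ▸ hgz)
    have hp1 : ((hT.existsUnique_path x y).exists.choose).IsPath :=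
      (hT.existsUnique_path x y).exists.choose_spec
    obtain ⟨u1, u2, hne, ha1, ha2⟩ := two_neighbors hp1 hz hzx hzy
    have e1 : u1 = g • w := huniq' g u1 (hgz ▸ ha1)
    have e2 : u2 = g • w := huniq' g u2 (hgz ▸ ha2)
    exact hne (e1.trans e2.symm)
  have hSuniv := hmin S hSne hSinv hSsub
  have hvS : v ∈ S := hSuniv ▸ Set.mem_univ v
  exact hvS 1 (one_smul G v)

end Aux

/-- In a minimal strongly slide-free `G`-tree, no vertex stabilizer fixes an edge;
hence distinct vertices have distinct stabilizers and each vertex stabilizer is a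
maximal elliptic subgroup. -/
theorem stabilizers_maximal_elliptic {G V : Type*} [Group G] [MulAction G V]
    {T : SimpleGraph V} (hT : T.IsTree)
    (hact : ActsOnGraph G T) (hni : NoInversions G T)
    (hmin : MinimalAction G hT) (hssf : StronglySlideFree G T) :
    (∀ v a b : V, T.Adj a b → ¬ MulAction.stabilizer G v ≤ edgeStab G a b) ∧
    (∀ u v : V, MulAction.stabilizer G u = MulAction.stabilizer G v → u = v) ∧
    (∀ v : V, IsElliptic G V (MulAction.stabilizer G v) ∧
      ∀ H : Subgroup G, IsElliptic G V H → MulAction.stabilizer G v ≤ H →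
        H = MulAction.stabilizer G v) := by
  have key : ∀ {a b : V}, T.Adj a b →
      MulAction.stabilizer G a ≤ MulAction.stabilizer G b → False :=
    fun hadj hle => no_nested_adj hT hact hni hmin hssf hadj hle
  have part1 : ∀ v a b : V, T.Adj a b → ¬ MulAction.stabilizer G v ≤ edgeStab G a b := by
    intro v a b hab hle
    have hla : MulAction.stabilizer G v ≤ MulAction.stabilizer G a :=
      le_trans hle inf_le_left
    have hlb : MulAction.stabilizer G v ≤ MulAction.stabilizer G b :=
      le_trans hle inf_le_right
    by_cases hva : v = a
    · exact key (hva ▸ hab) (hva ▸ hlb)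
    · obtain ⟨x1, hadj1, hx1⟩ := exists_adj_seg hT hva
      have hle1 : MulAction.stabilizer G v ≤ MulAction.stabilizer G x1 := by
        intro h hh
        rw [MulAction.mem_stabilizer_iff]
        exact fix_seg hT hact (MulAction.mem_stabilizer_iff.mp hh)
          (MulAction.mem_stabilizer_iff.mp (hla hh)) x1 hx1
      exact key hadj1 hle1
  refine ⟨part1, ?_, ?_⟩
  · intro u v heq
    by_contra hne
    obtain ⟨x1, hadj1, hx1⟩ := exists_adj_seg hT hne
    have hle1 : MulAction.stabilizer G u ≤ MulAction.stabilizer G x1 := by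
      intro h hh
      rw [MulAction.mem_stabilizer_iff]
      exact fix_seg hT hact (MulAction.mem_stabilizer_iff.mp hh)
        (MulAction.mem_stabilizer_iff.mp (heq ▸ hh : h ∈ MulAction.stabilizer G v)) x1 hx1
    exact key hadj1 hle1
  · intro v
    refine ⟨⟨v, fun h hh => MulAction.mem_stabilizer_iff.mp hh⟩, ?_⟩
    rintro H ⟨w, hw⟩ hle
    by_cases hwv : w = v
    · refine le_antisymm ?_ hle
      intro h hh
      rw [MulAction.mem_stabilizer_iff]
      exact hwv ▸ hw h hh
    · exfalso
      have hvw : v ≠ w := fun h => hwv h.symm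
      obtain ⟨x1, hadj1, hx1⟩ := exists_adj_seg hT hvw
      have hle1 : MulAction.stabilizer G v ≤ MulAction.stabilizer G x1 := by
        intro h hh
        rw [MulAction.mem_stabilizer_iff]
        exact fix_seg hT hact (MulAction.mem_stabilizer_iff.mp hh)
          (hw h (hle hh)) x1 hx1
      exact key hadj1 hle1
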